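/- arXiv:math/0701275 — 3 statements merged into one kernel-verified Lean document; each statement's English description precedes it below -/
import Mathlib

section
/- Let n : (0,∞) → ℕ be a nondecreasing counting function, N(r) = ∫_{r₀}^r n(t)/t dt, and u > 0. Suppose n(r)/r^u → 0 and N(r)/r^u → 0 as r → ∞, n(r₀) = N(r₀) = 0, and ∫_{r₀}^∞ N(t)/t^{u+1} dt ≤ M. Then Σ_{j} |z_j|^{-u} ≤ u² M, where (z_j) enumerates the points counted by n (i.e., n(r) = #{j : |z_j| ≤ r}) with |z_j| > r₀. -/
open MeasureTheory Filter intervalIntegral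

open Set
open scoped ENNReal

lemma lintA {u : ℝ} (hu : 0 < u) {c : ℝ} (hc : 0 < c) :
    ∫⁻ t in Set.Ioi c, ENNReal.ofReal (u * t ^ (-(u+1))) = ENNReal.ofReal (c ^ (-u)) := by
  have hlt : -(u+1) < -1 := by linarith
  have hint : IntegrableOn (fun t : ℝ => u * t ^ (-(u+1))) (Set.Ioi c) :=
    (integrableOn_Ioi_rpow_of_lt hlt hc).const_mul u
  rw [← ofReal_integral_eq_lintegral_ofReal hint]
  · rw [MeasureTheory.integral_const_mul, integral_Ioi_rpow_of_lt hlt hc]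
    congr 1
    have : -(u+1) + 1 = -u := by ring
    rw [this]
    field_simp
  · filter_upwards [self_mem_ae_restrict (measurableSet_Ioi (a := c))] with t ht
    exact mul_nonneg hu.le (Real.rpow_nonneg (le_of_lt (lt_trans hc ht)) _)

lemma lintB {u : ℝ} (hu : 0 < u) {r₀ c : ℝ} (hr₀ : 0 < r₀) (hc : r₀ < c) :
    ∫⁻ t in Set.Ioi r₀, (Set.Ici c).indicator (fun t => ENNReal.ofReal (u * t ^ (-(u+1)))) t
      = ENNReal.ofReal (c ^ (-u)) := by
  rw [lintegral_indicator measurableSet_Ici _, Measure.restrict_restrict measurableSet_Ici]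
  have h1 : Set.Ici c ∩ Set.Ioi r₀ = Set.Ici c := by
    apply Set.inter_eq_left.mpr
    exact fun x hx => lt_of_lt_of_le hc hx
  rw [h1, ← restrict_Ioi_eq_restrict_Ici]
  exact lintA hu (hr₀.trans hc)

/-- Quantitative Borel-sum bound: if `(z_j)` enumerates points with `|z_j| > r₀`,
`n(t) = #{j : |z_j| ≤ t}` is their (finite-valued) counting function,
`N(t) = ∫_{r₀}^t n(s)/s ds`, `n(t)/t^u → 0`, `N(t)/t^u → 0` as `t → ∞`, and
`∫_{r₀}^∞ N(t)/t^{u+1} dt ≤ M`, then `Σ_j |z_j|^{-u} ≤ u² M`. -/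
theorem stmt_7 (z : ℕ → ℂ) (r₀ u M : ℝ) (hr₀ : 0 < r₀) (hu : 0 < u)
    (hmod : ∀ j, r₀ < ‖z j‖)
    (hfin : ∀ t : ℝ, {j : ℕ | ‖z j‖ ≤ t}.Finite)
    (n : ℝ → ℕ) (hn : ∀ t, (n t : ℕ) = Nat.card {j : ℕ | ‖z j‖ ≤ t})
    (N : ℝ → ℝ) (hN : ∀ t, N t = ∫ s in r₀..t, (n s : ℝ) / s)
    (hlim1 : Tendsto (fun t => (n t : ℝ) / t ^ u) atTop (nhds 0))
    (hlim2 : Tendsto (fun t => N t / t ^ u) atTop (nhds 0))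
    (hint : IntegrableOn (fun t => N t / t ^ (u + 1)) (Set.Ioi r₀))
    (hM : ∫ t in Set.Ioi r₀, N t / t ^ (u + 1) ≤ M) :
    ∑' j : ℕ, ‖z j‖ ^ (-u) ≤ u ^ 2 * M := by
  set w : ℝ → ℝ≥0∞ := fun t => ENNReal.ofReal (u * t ^ (-(u+1))) with hw_def
  set g : ℝ → ℝ≥0∞ := fun s => ENNReal.ofReal ((n s : ℝ) / s) with hg_def
  have hw_meas : Measurable w := by
    apply ENNReal.measurable_ofReal.comp
    exact (measurable_id.pow_const _).const_mul u
  have hnmono : Monotone n := fun s t hst => by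
    rw [hn, hn]; exact Nat.card_mono (hfin t) (fun j hj => le_trans hj hst)
  have hnmeasR : Measurable (fun t => (n t : ℝ)) :=
    (Nat.mono_cast.comp hnmono : Monotone fun t => (n t : ℝ)).measurable
  have hg_meas : Measurable g := ENNReal.measurable_ofReal.comp (hnmeasR.div measurable_id)
  -- nonnegativity of N on [r₀, ∞)
  have hNnonneg : ∀ t, r₀ ≤ t → 0 ≤ N t := by
    intro t ht
    rw [hN]
    apply intervalIntegral.integral_nonneg ht
    intro s hs
    exact div_nonneg (Nat.cast_nonneg _) (le_trans hr₀.le hs.1)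
  have hM0 : 0 ≤ M := by
    refine le_trans (setIntegral_nonneg measurableSet_Ioi fun t ht => ?_) hM
    exact div_nonneg (hNnonneg t (le_of_lt ht)) (Real.rpow_nonneg (le_of_lt (hr₀.trans ht)) _)
  have hu2M : 0 ≤ u ^ 2 * M := mul_nonneg (sq_nonneg u) hM0
  -- step 1 : per-point representation and counting
  have hstep1 : ∑' j, ENNReal.ofReal (‖z j‖ ^ (-u))
      = ∫⁻ t in Set.Ioi r₀, (n t : ℝ≥0∞) * w t := by
    have hrep : ∀ j, ENNReal.ofReal (‖z j‖ ^ (-u))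
        = ∫⁻ t in Set.Ioi r₀, (Set.Ici ‖z j‖).indicator w t :=
      fun j => (lintB hu hr₀ (hmod j)).symm
    calc ∑' j, ENNReal.ofReal (‖z j‖ ^ (-u))
        = ∑' j, ∫⁻ t in Set.Ioi r₀, (Set.Ici ‖z j‖).indicator w t := tsum_congr hrep
      _ = ∫⁻ t in Set.Ioi r₀, ∑' j, (Set.Ici ‖z j‖).indicator w t :=
          (lintegral_tsum (fun j => (hw_meas.indicator measurableSet_Ici).aemeasurable)).symm
      _ = ∫⁻ t in Set.Ioi r₀, (n t : ℝ≥0∞) * w t := by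
          apply lintegral_congr
          intro t
          have hc : ∀ j, (Set.Ici ‖z j‖).indicator w t
              = Set.indicator {j : ℕ | ‖z j‖ ≤ t} (fun _ => w t) j := by
            intro j
            simp only [Set.indicator_apply, Set.mem_Ici, Set.mem_setOf_eq]
          rw [tsum_congr hc,
            tsum_eq_sum (s := (hfin t).toFinset)
              (fun j hj => Set.indicator_of_notMem (by simpa using hj) _),
            Finset.sum_congr rfl (fun j hj => Set.indicator_of_mem (by simpa using hj) _),
            Finset.sum_const, nsmul_eq_mul]
          congr 1
          rw [hn t, Nat.cast_inj, Nat.card_coe_set_eq,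
            Set.ncard_eq_toFinset_card _ (hfin t)]
  -- step 2 : representation of N
  have hstep2 : ∀ t, r₀ < t → ENNReal.ofReal (N t)
      = ∫⁻ s in Set.Ioi r₀, (Set.Iic t).indicator g s := by
    intro t ht
    have hIoc : IntegrableOn (fun s => (n s : ℝ) / s) (Set.Ioc r₀ t) := by
      apply Measure.integrableOn_of_bounded (M := (n t : ℝ) / r₀) measure_Ioc_lt_top.ne
        (hnmeasR.div measurable_id).aestronglyMeasurable
      filter_upwards [self_mem_ae_restrict measurableSet_Ioc] with s hs
      simp only [Pi.div_apply, id_eq]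
      rw [Real.norm_eq_abs,
        abs_of_nonneg (div_nonneg (Nat.cast_nonneg _) (le_trans hr₀.le hs.1.le))]
      exact div_le_div₀ (Nat.cast_nonneg _) (Nat.cast_le.mpr (hnmono hs.2)) hr₀ hs.1.le
    have hpos : 0 ≤ᵐ[volume.restrict (Set.Ioc r₀ t)] fun s => (n s : ℝ) / s := by
      filter_upwards [self_mem_ae_restrict measurableSet_Ioc] with s hs
      exact div_nonneg (Nat.cast_nonneg _) (le_trans hr₀.le hs.1.le)
    rw [hN t, intervalIntegral.integral_of_le ht.le,
      ofReal_integral_eq_lintegral_ofReal hIoc hpos,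
      lintegral_indicator measurableSet_Iic _, Measure.restrict_restrict measurableSet_Iic,
      Set.inter_comm, Set.Ioi_inter_Iic]
  -- step 3 : Tonelli
  have hstep3 : ∫⁻ t in Set.Ioi r₀, ENNReal.ofReal (N t) * w t
      = ∫⁻ s in Set.Ioi r₀, g s * ENNReal.ofReal (s ^ (-u)) := by
    have hmeasF : Measurable (Function.uncurry fun t s => (Set.Iic t).indicator g s * w t) := by
      have h1 : (Function.uncurry fun t s => (Set.Iic t).indicator g s * w t)
          = fun p : ℝ × ℝ => ({q : ℝ × ℝ | q.2 ≤ q.1}.indicator (fun q => g q.2) p) * w p.1 := by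
        funext p
        simp only [Function.uncurry, Set.indicator_apply, Set.mem_Iic, Set.mem_setOf_eq]
      rw [h1]
      exact ((hg_meas.comp measurable_snd).indicator
        (measurableSet_le measurable_snd measurable_fst)).mul (hw_meas.comp measurable_fst)
    calc ∫⁻ t in Set.Ioi r₀, ENNReal.ofReal (N t) * w t
        = ∫⁻ t in Set.Ioi r₀, ∫⁻ s in Set.Ioi r₀, (Set.Iic t).indicator g s * w t := by
          refine setLIntegral_congr_fun measurableSet_Ioi (fun t ht => ?_)
          rw [hstep2 t ht, ← lintegral_mul_const _ (hg_meas.indicator measurableSet_Iic)]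
      _ = ∫⁻ s in Set.Ioi r₀, ∫⁻ t in Set.Ioi r₀, (Set.Iic t).indicator g s * w t :=
          lintegral_lintegral_swap hmeasF.aemeasurable
      _ = ∫⁻ s in Set.Ioi r₀, g s * ENNReal.ofReal (s ^ (-u)) := by
          refine setLIntegral_congr_fun measurableSet_Ioi (fun s hs => ?_)
          have hpt : ∀ t, (Set.Iic t).indicator g s * w t = g s * (Set.Ici s).indicator w t := by
            intro t
            simp only [Set.indicator_apply, Set.mem_Iic, Set.mem_Ici]
            by_cases h : s ≤ t <;> simp [h, mul_comm]
          simp_rw [hpt]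
          rw [lintegral_const_mul _ (hw_meas.indicator measurableSet_Ici), lintB hu hr₀ hs]
  -- step 4 : the key ENNReal inequality
  have hkey : ∑' j, ENNReal.ofReal (‖z j‖ ^ (-u)) ≤ ENNReal.ofReal (u ^ 2 * M) := by
    have hpt1 : ∀ t ∈ Set.Ioi r₀, (n t : ℝ≥0∞) * w t
        = ENNReal.ofReal u * (g t * ENNReal.ofReal (t ^ (-u))) := by
      intro t ht
      have ht0 : (0:ℝ) < t := hr₀.trans ht
      calc (n t : ℝ≥0∞) * w t
          = ENNReal.ofReal ((n t : ℝ) * (u * t ^ (-(u+1)))) := by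
            rw [← ENNReal.ofReal_natCast, ← ENNReal.ofReal_mul (Nat.cast_nonneg _)]
        _ = ENNReal.ofReal (u * (((n t : ℝ) / t) * t ^ (-u))) := by
            congr 1
            rw [show -(u+1) = -u + (-1) by ring, Real.rpow_add ht0, Real.rpow_neg_one]
            field_simp
        _ = ENNReal.ofReal u * ENNReal.ofReal (((n t : ℝ) / t) * t ^ (-u)) :=
            ENNReal.ofReal_mul hu.le
        _ = ENNReal.ofReal u * (g t * ENNReal.ofReal (t ^ (-u))) := by
            rw [ENNReal.ofReal_mul (div_nonneg (Nat.cast_nonneg _) ht0.le)]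
    have hpt2 : ∀ t ∈ Set.Ioi r₀, ENNReal.ofReal (N t) * w t
        = ENNReal.ofReal u * ENNReal.ofReal (N t / t ^ (u+1)) := by
      intro t ht
      have ht0 : (0:ℝ) < t := hr₀.trans ht
      calc ENNReal.ofReal (N t) * w t
          = ENNReal.ofReal (N t * (u * t ^ (-(u+1)))) :=
            (ENNReal.ofReal_mul (hNnonneg t (le_of_lt ht))).symm
        _ = ENNReal.ofReal (u * (N t / t ^ (u+1))) := by
            congr 1
            rw [Real.rpow_neg ht0.le]
            ring
        _ = ENNReal.ofReal u * ENNReal.ofReal (N t / t ^ (u+1)) := ENNReal.ofReal_mul hu.le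
    have hT : ∫⁻ t in Set.Ioi r₀, ENNReal.ofReal (N t / t ^ (u+1))
        = ENNReal.ofReal (∫ t in Set.Ioi r₀, N t / t ^ (u+1)) := by
      rw [ofReal_integral_eq_lintegral_ofReal hint]
      filter_upwards [self_mem_ae_restrict measurableSet_Ioi] with t ht
      exact div_nonneg (hNnonneg t (le_of_lt ht))
        (Real.rpow_nonneg (le_of_lt (hr₀.trans ht)) _)
    calc ∑' j, ENNReal.ofReal (‖z j‖ ^ (-u))
        = ∫⁻ t in Set.Ioi r₀, (n t : ℝ≥0∞) * w t := hstep1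
      _ = ∫⁻ t in Set.Ioi r₀, ENNReal.ofReal u * (g t * ENNReal.ofReal (t ^ (-u))) :=
          setLIntegral_congr_fun measurableSet_Ioi hpt1
      _ = ENNReal.ofReal u * ∫⁻ t in Set.Ioi r₀, g t * ENNReal.ofReal (t ^ (-u)) :=
          lintegral_const_mul' _ _ ENNReal.ofReal_ne_top
      _ = ENNReal.ofReal u * ∫⁻ t in Set.Ioi r₀, ENNReal.ofReal (N t) * w t := by
          rw [hstep3]
      _ = ENNReal.ofReal u * ∫⁻ t in Set.Ioi r₀,
            ENNReal.ofReal u * ENNReal.ofReal (N t / t ^ (u+1)) := by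
          rw [setLIntegral_congr_fun measurableSet_Ioi hpt2]
      _ = ENNReal.ofReal u * (ENNReal.ofReal u
            * ∫⁻ t in Set.Ioi r₀, ENNReal.ofReal (N t / t ^ (u+1))) := by
          rw [lintegral_const_mul' _ _ ENNReal.ofReal_ne_top]
      _ ≤ ENNReal.ofReal u * (ENNReal.ofReal u * ENNReal.ofReal M) := by
          gcongr
          rw [hT]
          exact ENNReal.ofReal_le_ofReal hM
      _ = ENNReal.ofReal (u ^ 2 * M) := by
          rw [← ENNReal.ofReal_mul hu.le, ← ENNReal.ofReal_mul hu.le]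
          congr 1
          ring
  -- conclusion
  have hnn : ∀ j, 0 ≤ ‖z j‖ ^ (-u) := fun j => Real.rpow_nonneg (norm_nonneg _) _
  have hsumle : ∀ F : Finset ℕ, ∑ j ∈ F, ‖z j‖ ^ (-u) ≤ u ^ 2 * M := by
    intro F
    have h1 : ∑ j ∈ F, ENNReal.ofReal (‖z j‖ ^ (-u)) ≤ ENNReal.ofReal (u ^ 2 * M) :=
      le_trans (ENNReal.sum_le_tsum F) hkey
    rw [← ENNReal.ofReal_sum_of_nonneg (fun j _ => hnn j)] at h1
    exact (ENNReal.ofReal_le_ofReal_iff hu2M).mp h1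
  exact Summable.tsum_le_of_sum_le (summable_of_sum_le hnn hsumle) hsumle
end

section
/- Let m and L̂ satisfy: L̂ⁿ(1)(x) → ρ(x) uniformly on a set of full m-measure with ρ bounded, and suppose A is a Borel set such that for every n ≥ 0 there is a Borel set A_n with A = f^{-n}(A_n), where ∫_A ψ dm = ∫_{A_n} L̂ⁿψ dm for all bounded continuous ψ. If μ = ρ·m is a probability measure (∫ρ dm = 1), then ∫_A ψ dm = μ(A)·∫ψ dm for every bounded continuous ψ; in particular taking ψ = 1 gives m(A) = μ(A), and the measure B ↦ m(A∩B)/μ(A) (when μ(A) > 0) coincides with m, forcing m(Aᶜ) = 0. Hence every tail-measurable set A ∈ ⋂_n f^{-n}(𝔅) has m(A) ∈ {0,1}, i.e. the system is metrically exact. -/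
open MeasureTheory
open scoped ENNReal

/-- Metric exactness from the spectral gap: let `m` be a probability measure, `L̂` a
normalized transfer operator whose iterates `L̂ⁿψ` converge uniformly to `(∫ψ dm)·ρ`
for all bounded measurable `ψ`, where the density `ρ` is bounded with `∫ρ dm = 1`.
If `A` is a measurable set such that for every `n` there is a measurable `A_n` with
`A = f^{-n}(A_n)` and the duality `∫_A ψ dm = ∫_{A_n} L̂ⁿψ dm` holds for all bounded
measurable `ψ`, then `m(A) ∈ {0,1}`. -/
theorem stmt_14 {X : Type*} [MeasurableSpace X] (m : Measure X) [IsProbabilityMeasure m]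
    (f : X → X) (hf : Measurable f)
    (L : (X → ℝ) → (X → ℝ)) (ρ : X → ℝ)
    (hρm : Measurable ρ) (hρb : ∃ Cρ : ℝ, ∀ x, |ρ x| ≤ Cρ)
    (hρint : ∫ x, ρ x ∂m = 1)
    (hconv : ∀ ψ : X → ℝ, Measurable ψ → (∃ Cψ : ℝ, ∀ x, |ψ x| ≤ Cψ) →
      ∀ ε : ℝ, 0 < ε → ∃ Nε : ℕ, ∀ n ≥ Nε, ∀ x,
        |L^[n] ψ x - (∫ y, ψ y ∂m) * ρ x| ≤ ε)
    (A : Set X) (hA : MeasurableSet A)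
    (hAn : ∀ n : ℕ, ∃ B : Set X, MeasurableSet B ∧ A = f^[n] ⁻¹' B ∧
      ∀ ψ : X → ℝ, Measurable ψ → (∃ Cψ : ℝ, ∀ x, |ψ x| ≤ Cψ) →
        ∫ x in A, ψ x ∂m = ∫ x in B, L^[n] ψ x ∂m) :
    m A = 0 ∨ m A = 1 := by
  obtain ⟨Cρ, hCρ⟩ := hρb
  set a : ℝ := (m A).toReal with ha_def
  have hmA_ne : m A ≠ ⊤ := measure_ne_top m A
  have ha0 : 0 ≤ a := ENNReal.toReal_nonneg
  have ha1 : a ≤ 1 := by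
    have : m A ≤ 1 := prob_le_one
    calc a ≤ (1 : ℝ≥0∞).toReal := ENNReal.toReal_mono (by simp) this
    _ = 1 := by simp
  -- the two test functions
  set ψ1 : X → ℝ := fun _ => 1 with hψ1
  set ψ2 : X → ℝ := A.indicator (fun _ => (1:ℝ)) with hψ2
  have hψ1m : Measurable ψ1 := measurable_const
  have hψ1b : ∃ C : ℝ, ∀ x, |ψ1 x| ≤ C := ⟨1, fun x => by simp [hψ1]⟩
  have hψ2m : Measurable ψ2 := measurable_const.indicator hA
  have hψ2b : ∃ C : ℝ, ∀ x, |ψ2 x| ≤ C := by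
    refine ⟨1, fun x => ?_⟩
    by_cases hx : x ∈ A <;> simp [hψ2, Set.indicator_apply, hx]
  have hint1 : ∫ y, ψ1 y ∂m = 1 := by simp [hψ1]
  have hint2 : ∫ y, ψ2 y ∂m = a := by
    rw [hψ2, integral_indicator_const (1:ℝ) hA]
    simp [ha_def]; rfl
  have hρint' : ∀ (B : Set X), Integrable ρ (m.restrict B) := by
    intro B
    refine Integrable.mono' (integrable_const Cρ) hρm.aestronglyMeasurable ?_
    exact ae_of_all _ fun x => by simpa using hCρ x
  -- key estimate
  have key : ∀ ε : ℝ, 0 < ε → |a - a * a| ≤ 2 * ε := by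
    intro ε hε
    obtain ⟨N1, hN1⟩ := hconv ψ1 hψ1m hψ1b ε hε
    obtain ⟨N2, hN2⟩ := hconv ψ2 hψ2m hψ2b ε hε
    set n := max N1 N2 with hn
    obtain ⟨B, hB, hAB, hdual⟩ := hAn n
    have hmB : (m B).toReal ≤ 1 := by
      have : m B ≤ 1 := prob_le_one
      calc (m B).toReal ≤ (1 : ℝ≥0∞).toReal := ENNReal.toReal_mono (by simp) this
      _ = 1 := by simp
    -- generic estimate
    have est : ∀ (h : X → ℝ) (c : ℝ), (∀ x, |h x - c * ρ x| ≤ ε) →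
        (∫ x in B, h x ∂m = 0) ∨ |(∫ x in B, h x ∂m) - c * ∫ x in B, ρ x ∂m| ≤ ε := by
      intro h c hbd
      by_cases hi : Integrable h (m.restrict B)
      · right
        have hcρ : Integrable (fun x => c * ρ x) (m.restrict B) := (hρint' B).const_mul c
        have hsub : (∫ x in B, h x ∂m) - c * ∫ x in B, ρ x ∂m
            = ∫ x in B, (h x - c * ρ x) ∂m := by
          rw [integral_sub hi hcρ, integral_const_mul]
        rw [hsub]
        have hnorm : ‖∫ x in B, (h x - c * ρ x) ∂m‖ ≤ ε * (m B).toReal := by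
          refine norm_setIntegral_le_of_norm_le_const (measure_lt_top _ _) ?_
          · intro x _
            simpa [Real.norm_eq_abs] using hbd x
        have : ‖∫ x in B, (h x - c * ρ x) ∂m‖ ≤ ε := by
          refine hnorm.trans ?_
          nlinarith [ENNReal.toReal_nonneg (a := m B)]
        simpa [Real.norm_eq_abs] using this
      · left
        exact integral_undef hi
    -- evaluate the two set integrals over A
    have hA1 : ∫ x in A, ψ1 x ∂m = a := by simp [hψ1, ha_def]; rfl
    have hA2 : ∫ x in A, ψ2 x ∂m = a := by
      have : ∫ x in A, ψ2 x ∂m = ∫ x in A, (1:ℝ) ∂m := by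
        refine setIntegral_congr_fun hA fun x hx => ?_
        simp [hψ2, Set.indicator_of_mem hx]
      rw [this]; simp [ha_def]; rfl
    have hd1 : a = ∫ x in B, L^[n] ψ1 x ∂m := by rw [← hA1]; exact hdual ψ1 hψ1m hψ1b
    have hd2 : a = ∫ x in B, L^[n] ψ2 x ∂m := by rw [← hA2]; exact hdual ψ2 hψ2m hψ2b
    have hbd1 : ∀ x, |L^[n] ψ1 x - 1 * ρ x| ≤ ε := by
      intro x
      have := hN1 n (le_max_left _ _) x
      rwa [hint1] at this
    have hbd2 : ∀ x, |L^[n] ψ2 x - a * ρ x| ≤ ε := by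
      intro x
      have := hN2 n (le_max_right _ _) x
      rwa [hint2] at this
    set r : ℝ := ∫ x in B, ρ x ∂m with hr
    rcases est (L^[n] ψ1) 1 hbd1 with h0 | hE1
    · have : a = 0 := by rw [hd1, h0]
      rw [this]; simp; positivity
    rcases est (L^[n] ψ2) a hbd2 with h0 | hE2
    · have : a = 0 := by rw [hd2, h0]
      rw [this]; simp; positivity
    rw [← hd1] at hE1
    rw [← hd2] at hE2
    -- |a - r| ≤ ε and |a - a*r| ≤ ε
    have h1 : |a - r| ≤ ε := by simpa using hE1
    have h2 : |a - a * r| ≤ ε := hE2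
    have : |a - a * a| ≤ |a - a * r| + |a * r - a * a| := by
      have := abs_sub_abs_le_abs_sub (a - a * r) (a - a * a)
      calc |a - a * a| = |(a - a * r) + (a * r - a * a)| := by ring_nf
        _ ≤ |a - a * r| + |a * r - a * a| := abs_add_le _ _
    have h3 : |a * r - a * a| ≤ ε := by
      have : |a * r - a * a| = a * |r - a| := by
        rw [show a * r - a * a = a * (r - a) by ring, abs_mul, abs_of_nonneg ha0]
      rw [this]
      calc a * |r - a| ≤ 1 * |r - a| := by
            apply mul_le_mul_of_nonneg_right ha1 (abs_nonneg _)
        _ = |r - a| := one_mul _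
        _ = |a - r| := abs_sub_comm _ _
        _ ≤ ε := h1
    linarith
  -- conclude a * a = a
  have haa : a - a * a = 0 := by
    by_contra hne
    have hpos : 0 < |a - a * a| := abs_pos.mpr hne
    have := key (|a - a * a| / 4) (by positivity)
    linarith
  have : a = 0 ∨ a = 1 := by
    rcases mul_eq_zero.mp (show a * (1 - a) = 0 by nlinarith) with h | h
    · exact Or.inl h
    · exact Or.inr (by linarith)
  rcases this with h | h
  · left
    exact (ENNReal.toReal_eq_zero_iff _).mp h |>.resolve_right hmA_ne
  · right
    have : (m A).toReal = (1 : ℝ≥0∞).toReal := by simpa using h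
    exact (ENNReal.toReal_eq_toReal_iff' hmA_ne (by simp)).mp this
end

section
/- Let L̂ : C_b(J) → C_b(J) be a positive bounded linear operator with L̂1 ≤ L on J, and suppose L̂ⁿ1(w) ≤ 1 whenever |w| ≥ R₀ (tail smallness) and ∫ L̂ⁿ1 dm = 1 for a Borel probability measure m with m(D(0,R₀)) > 0, together with the Harnack-type comparison L̂ⁿ1(w₁) ≤ K·L̂ⁿ1(w₂) for all w₁, w₂ ∈ J ∩ D(0,R₀) and all n. Then sup_n ‖L̂ⁿ1‖_∞ ≤ max(L, K/m(D(0,R₀))): by induction, if the sup of L̂^{n+1}1 is attained at a point w with |w| ≥ R₀ then L̂^{n+1}1(w) ≤ ‖L̂ⁿ1‖_∞·L̂1(w) ≤ ‖L̂ⁿ1‖_∞, while if |w| < R₀ then 1 = ∫L̂^{n+1}1 dm ≥ K^{-1} L̂^{n+1}1(w)·m(D(0,R₀)). -/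
open MeasureTheory Metric

/-- Uniform upper bound for the iterates `gₙ = L̂ⁿ1` of a normalized transfer
operator: assuming `L̂1 ≤ L`, the tail bound `L̂1(w) ≤ 1` for `|w| ≥ R₀`, the
normalization `∫ L̂ⁿ1 dm = 1`, and the Harnack comparison
`L̂ⁿ1(w₁) ≤ K·L̂ⁿ1(w₂)` on `J ∩ D(0,R₀)`, one gets
`sup_n ‖L̂ⁿ1‖_∞ ≤ max(L, K/m(J ∩ D(0,R₀)))`. -/
theorem stmt_17 (J : Set ℂ) (hJ : MeasurableSet J)
    (m : Measure ℂ) [IsProbabilityMeasure m] (hmJ : m J = 1)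
    (g : ℕ → ℂ → ℝ) (L K R₀ : ℝ) (hK : 1 ≤ K) (hR₀ : 0 < R₀)
    (hmeas : ∀ n, Measurable (g n))
    (hg0 : ∀ w ∈ J, g 0 w = 1)
    (hgnn : ∀ n, ∀ w ∈ J, 0 ≤ g n w)
    (hbdd : ∀ n, BddAbove (g n '' J))
    (hattain : ∀ n, ∃ w ∈ J, g n w = sSup (g n '' J))
    (hchain : ∀ n, ∀ w ∈ J, g (n + 1) w ≤ sSup (g n '' J) * g 1 w)
    (hL : ∀ w ∈ J, g 1 w ≤ L)
    (htail : ∀ w ∈ J, R₀ ≤ ‖w‖ → g 1 w ≤ 1)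
    (hint : ∀ n, ∫ w in J, g n w ∂m = 1)
    (hharnack : ∀ n, ∀ w₁ ∈ J ∩ ball 0 R₀, ∀ w₂ ∈ J ∩ ball 0 R₀,
      g n w₁ ≤ K * g n w₂)
    (hpos : 0 < m (J ∩ ball 0 R₀)) :
    ∀ n, ∀ w ∈ J, g n w ≤ max L (K / (m (J ∩ ball 0 R₀)).toReal) := by
  set s : Set ℂ := J ∩ ball 0 R₀ with hs
  have hsm : MeasurableSet s := hJ.inter measurableSet_ball
  have hsfin : m s ≠ ⊤ := (measure_lt_top m s).ne
  set μt : ℝ := (m s).toReal with hμt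
  have hμtpos : 0 < μt := ENNReal.toReal_pos hpos.ne' hsfin
  have hμt1 : μt ≤ 1 := by
    have : m s ≤ 1 := prob_le_one
    simpa [hμt] using ENNReal.toReal_le_of_le_ofReal (by norm_num) (by simpa using this)
  have hKpos : (0:ℝ) < K := lt_of_lt_of_le one_pos hK
  set M : ℝ := max L (K / μt) with hM
  have h1M : 1 ≤ M := by
    have : 1 ≤ K / μt := (le_div_iff₀ hμtpos).2 (by nlinarith)
    exact this.trans (le_max_right _ _)
  -- key: the Harnack/integral bound at a point of the ball
  have hball : ∀ n, ∀ w ∈ J, w ∈ ball 0 R₀ → g n w ≤ K / μt := by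
    intro n w hwJ hwb
    -- integrability of g n on J
    have hS : ∀ x ∈ J, g n x ≤ sSup (g n '' J) := fun x hx =>
      le_csSup (hbdd n) ⟨x, hx, rfl⟩
    have hIntJ : IntegrableOn (g n) J m := by
      refine Integrable.mono' (integrable_const (sSup (g n '' J))) ((hmeas n).aestronglyMeasurable) ?_
      refine (ae_restrict_iff' hJ).2 (Filter.Eventually.of_forall fun x hx => ?_)
      rw [Real.norm_eq_abs, abs_of_nonneg (hgnn n x hx)]
      exact hS x hx
    have hsub : s ⊆ J := Set.inter_subset_left
    have h1 : ∫ x in s, g n x ∂m ≤ ∫ x in J, g n x ∂m := by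
      refine setIntegral_mono_set hIntJ ?_ (HasSubset.Subset.eventuallyLE hsub)
      exact (ae_restrict_iff' hJ).2 (Filter.Eventually.of_forall fun x hx => hgnn n x hx)
    have h2 : ∫ x in s, (g n w / K) ∂m ≤ ∫ x in s, g n x ∂m := by
      refine setIntegral_mono_on (integrable_const _) (hIntJ.mono_set hsub) hsm ?_
      intro x hx
      have := hharnack n w ⟨hwJ, hwb⟩ x hx
      exact (div_le_iff₀' hKpos).2 this
    rw [setIntegral_const, smul_eq_mul] at h2
    have h3 : μt * (g n w / K) ≤ 1 := by
      rw [hint n] at h1; rw [show m.real s = μt from rfl] at h2; linarith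
    rw [mul_div_assoc'] at h3
    have h4 : μt * g n w ≤ K := (div_le_one hKpos).mp h3
    rw [le_div_iff₀ hμtpos]
    linarith [h4, mul_comm μt (g n w)]
  intro n
  induction n with
  | zero =>
    intro w hw
    rw [hg0 w hw]
    exact h1M
  | succ n ih =>
    obtain ⟨w0, hw0J, hw0⟩ := hattain (n + 1)
    have hSn : sSup (g n '' J) ≤ M := by
      obtain ⟨v, hvJ, hv⟩ := hattain n
      rw [← hv]; exact ih v hvJ
    have hSnn : 0 ≤ sSup (g n '' J) := by
      obtain ⟨v, hvJ, hv⟩ := hattain n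
      rw [← hv]; exact hgnn n v hvJ
    have hw0M : g (n + 1) w0 ≤ M := by
      by_cases hcase : R₀ ≤ ‖w0‖
      · have := hchain n w0 hw0J
        have h1 : g 1 w0 ≤ 1 := htail w0 hw0J hcase
        calc g (n + 1) w0 ≤ sSup (g n '' J) * g 1 w0 := this
          _ ≤ sSup (g n '' J) * 1 := mul_le_mul_of_nonneg_left h1 hSnn
          _ = sSup (g n '' J) := mul_one _
          _ ≤ M := hSn
      · have hb : w0 ∈ ball 0 R₀ := by
          simpa [mem_ball_zero_iff] using lt_of_not_ge hcase
        exact (hball (n + 1) w0 hw0J hb).trans (le_max_right _ _)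
    intro w hw
    calc g (n + 1) w ≤ sSup (g (n + 1) '' J) := le_csSup (hbdd _) ⟨w, hw, rfl⟩
      _ = g (n + 1) w0 := hw0.symm
      _ ≤ M := hw0M
end
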